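/- The function p ↦ κ_p := (1/2)(1 − (1 − 1/p)^{p/2})^{−1} is strictly increasing on (1, ∞). -/

import Mathlib

open Real Set

private lemma kappa_aux_hasDerivAt {p : ℝ} (hp : 1 < p) :
    HasDerivAt (fun p : ℝ => p / 2 * Real.log (1 - 1 / p))
      (1 / 2 * Real.log (1 - 1 / p) + p / 2 * ((1 / p ^ 2) / (1 - 1 / p))) p := by
  have hp0 : p ≠ 0 := by linarith
  have hpos : 0 < 1 - 1 / p := by
    rw [sub_pos, div_lt_one (by linarith)]; exact hp
  have h1 : HasDerivAt (fun p : ℝ => 1 - 1 / p) (1 / p ^ 2) p := by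
    have := (hasDerivAt_inv hp0).const_sub 1
    simpa [one_div] using this
  have h2 : HasDerivAt (fun p : ℝ => Real.log (1 - 1 / p)) ((1 / p ^ 2) / (1 - 1 / p)) p :=
    h1.log (ne_of_gt hpos)
  have h3 : HasDerivAt (fun p : ℝ => p / 2) (1 / 2) p := (hasDerivAt_id p).div_const 2
  simpa [Pi.mul_def] using h3.mul h2

private lemma kappa_aux_strictMono :
    StrictMonoOn (fun p : ℝ => p / 2 * Real.log (1 - 1 / p)) (Set.Ioi 1) := by
  apply StrictMonoOn.mono (s := interior (Set.Ioi (1:ℝ)) ∪ Set.Ioi 1) _ (by simp)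
  rw [isOpen_Ioi.interior_eq, Set.union_self]
  apply strictMonoOn_of_deriv_pos (convex_Ioi 1)
  · intro p hp
    exact (kappa_aux_hasDerivAt hp).continuousAt.continuousWithinAt
  · intro p hp
    rw [isOpen_Ioi.interior_eq] at hp
    have hp1 : (1:ℝ) < p := hp
    rw [(kappa_aux_hasDerivAt hp1).deriv]
    have hp0 : (0:ℝ) < p := by linarith
    have hpm : (0:ℝ) < p - 1 := by linarith
    have hpos : 0 < 1 - 1 / p := by
      rw [sub_pos, div_lt_one hp0]; exact hp1
    -- key inequality: log (1 - 1/p) + 1/(p-1) > 0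
    have hx : (0:ℝ) < p / (p - 1) := by positivity
    have hxne : p / (p - 1) ≠ 1 := by
      intro h
      rw [div_eq_one_iff_eq (ne_of_gt hpm)] at h
      linarith
    have hlog := Real.log_lt_sub_one_of_pos hx hxne
    have e1 : Real.log (p / (p - 1)) = Real.log p - Real.log (p - 1) :=
      Real.log_div (ne_of_gt hp0) (ne_of_gt hpm)
    have e2 : Real.log (1 - 1 / p) = Real.log (p - 1) - Real.log p := by
      rw [show 1 - 1 / p = (p - 1) / p by field_simp]
      exact Real.log_div (ne_of_gt hpm) (ne_of_gt hp0)
    have e3 : p / (p - 1) - 1 = 1 / (p - 1) := by field_simp; ring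
    have key : 0 < Real.log (1 - 1 / p) + 1 / (p - 1) := by
      rw [e2]; rw [e1, e3] at hlog; linarith
    have e4 : p / 2 * ((1 / p ^ 2) / (1 - 1 / p)) = 1 / 2 * (1 / (p - 1)) := by
      field_simp
    rw [e4]
    nlinarith [key]

/-- The function `p ↦ κ_p = (1/2)(1 − (1 − 1/p)^{p/2})⁻¹` is strictly increasing on `(1,∞)`. -/
theorem kappa_strictMonoOn :
    StrictMonoOn (fun p : ℝ => (1 / 2) * (1 - (1 - 1 / p) ^ (p / 2))⁻¹) (Set.Ioi 1) := by
  intro x hx y hy hxy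
  have hx1 : (1:ℝ) < x := hx
  have hy1 : (1:ℝ) < y := hy
  have hxpos : 0 < 1 - 1 / x := by rw [sub_pos, div_lt_one (by linarith)]; exact hx1
  have hypos : 0 < 1 - 1 / y := by rw [sub_pos, div_lt_one (by linarith)]; exact hy1
  have hxlt1 : 1 - 1 / x < 1 := by
    have : 0 < 1 / x := by positivity
    linarith
  have hylt1 : 1 - 1 / y < 1 := by
    have : 0 < 1 / y := by positivity
    linarith
  have hhx : (1 - 1 / x) ^ (x / 2) < 1 :=
    Real.rpow_lt_one (le_of_lt hxpos) hxlt1 (by linarith)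
  have hhy : (1 - 1 / y) ^ (y / 2) < 1 :=
    Real.rpow_lt_one (le_of_lt hypos) hylt1 (by linarith)
  have hmono : x / 2 * Real.log (1 - 1 / x) < y / 2 * Real.log (1 - 1 / y) :=
    kappa_aux_strictMono hx hy hxy
  have hlt : (1 - 1 / x) ^ (x / 2) < (1 - 1 / y) ^ (y / 2) := by
    rw [Real.rpow_def_of_pos hxpos, Real.rpow_def_of_pos hypos]
    apply Real.exp_lt_exp.2
    rw [mul_comm (Real.log (1 - 1 / x)), mul_comm (Real.log (1 - 1 / y))]
    exact hmono
  have h1 : 0 < 1 - (1 - 1 / y) ^ (y / 2) := by linarith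
  have h2 : 1 - (1 - 1 / y) ^ (y / 2) < 1 - (1 - 1 / x) ^ (x / 2) := by linarith
  have hinv : (1 - (1 - 1 / x) ^ (x / 2))⁻¹ < (1 - (1 - 1 / y) ^ (y / 2))⁻¹ :=
    inv_strictAnti₀ h1 h2
  simp only
  linarith
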